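/- Honest separation (second stability lemma): Let X, Y be sets, R, R' ⊆ X × Y stably separated with bound m. Let D, D' ⊆ Y be half-honestly finitely separated: for every finite B ⊆ Y there exists a ∈ X with B ∩ D ⊆ {y : R(a,y)}, B ∩ D' ⊆ {y : R'(a,y)}, and D ∩ {y : R'(a,y)} = ∅. Then for every finite B ⊆ Y there exist a₀,…,a_m ∈ X such that for each i: B ∩ D ⊆ {y : R(a_i,y)}, B ∩ D' ⊆ {y : R'(a_i,y)}, D ∩ {y : R'(a_i,y)} = ∅, and additionally D' ∩ ⋂_{i≤m} {y : R(a_i,y)} = ∅. -/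

import Mathlib

noncomputable def seqList10 {Y : Type*} (f : List Y → Y) : ℕ → List Y
  | 0 => []
  | n + 1 => seqList10 f n ++ [f (seqList10 f n)]

lemma seqList10_length {Y : Type*} (f : List Y → Y) (n : ℕ) :
    (seqList10 f n).length = n := by
  induction n with
  | zero => rfl
  | succ n ih => simp [seqList10, ih]

lemma seqList10_prefix {Y : Type*} (f : List Y → Y) {n k : ℕ} (h : n ≤ k) :
    seqList10 f n <+: seqList10 f k := by
  induction k with
  | zero => simp_all
  | succ k ih =>
    rcases Nat.lt_or_ge n (k + 1) with hlt | hge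
    · exact (ih (Nat.lt_succ_iff.mp hlt)).trans ⟨_, rfl⟩
    · have : n = k + 1 := le_antisymm h hge
      subst this; exact List.prefix_refl _

lemma seqList10_take {Y : Type*} (f : List Y → Y) {n k : ℕ} (h : n ≤ k) :
    (seqList10 f k).take n = seqList10 f n := by
  obtain ⟨t, ht⟩ := seqList10_prefix f h
  rw [← ht]
  have : List.take (seqList10 f n).length (seqList10 f n ++ t) = seqList10 f n := List.take_left
  rwa [seqList10_length] at this

theorem stmt_10 {X Y : Type*} (R R' : X → Y → Prop) (m : ℕ)
    (hstable : ¬ ∃ (a : Fin (m + 1) → X) (b : Fin (m + 1) → Y),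
      (∀ i j : Fin (m + 1), i < j → R (a i) (b j)) ∧
      (∀ i j : Fin (m + 1), j < i → R' (a i) (b j)))
    (D D' : Set Y)
    (hhalf : ∀ B : Finset Y, ∃ a : X,
      (∀ y ∈ B, y ∈ D → R a y) ∧ (∀ y ∈ B, y ∈ D' → R' a y) ∧
      (∀ y ∈ D, ¬ R' a y)) :
    ∀ B : Finset Y, ∃ a : Fin (m + 1) → X,
      (∀ i : Fin (m + 1), ∀ y ∈ B, y ∈ D → R (a i) y) ∧
      (∀ i : Fin (m + 1), ∀ y ∈ B, y ∈ D' → R' (a i) y) ∧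
      (∀ i : Fin (m + 1), ∀ y ∈ D, ¬ R' (a i) y) ∧
      (∀ y ∈ D', ∃ i : Fin (m + 1), ¬ R (a i) y) := by
  classical
  intro B
  by_contra h
  push_neg at h
  -- choose witnesses from hhalf on B ∪ B'
  choose A hA1 hA2 hA3 using fun B' : Finset Y => hhalf (B ∪ B')
  -- for each list l, the tuple i ↦ A ((l.take i).toFinset) satisfies the first
  -- three conditions, so by h there is a bad y ∈ D'
  have hbad : ∀ l : List Y, ∃ y, y ∈ D' ∧
      ∀ i : Fin (m + 1), R (A ((l.take (i : ℕ)).toFinset)) y := by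
    intro l
    have := h (fun i : Fin (m + 1) => A ((l.take (i : ℕ)).toFinset))
      (fun i y hy hyD => hA1 _ y (Finset.mem_union_left _ hy) hyD)
      (fun i y hy hyD => hA2 _ y (Finset.mem_union_left _ hy) hyD)
      (fun i y hy => hA3 _ y hy)
    obtain ⟨y, hy1, hy2⟩ := this
    exact ⟨y, hy1, hy2⟩
  choose nextY hmem hR using hbad
  set bl := seqList10 nextY with hbl
  refine hstable ⟨fun i => A ((bl (i : ℕ)).toFinset),
    fun j => nextY (bl (j : ℕ)), ?_, ?_⟩
  · intro i j hij
    have := hR (bl (j : ℕ)) i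
    rwa [seqList10_take nextY (le_of_lt hij)] at this
  · intro i j hji
    refine hA2 _ _ ?_ (hmem _)
    refine Finset.mem_union_right _ ?_
    rw [List.mem_toFinset]
    have hpre : bl ((j : ℕ) + 1) <+: bl (i : ℕ) := seqList10_prefix nextY hji
    apply hpre.subset
    show nextY (bl (j : ℕ)) ∈ bl (j : ℕ) ++ [nextY (bl (j : ℕ))]
    simp
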